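/- Let $k_{ij}$ be a fixed symmetric real array and $\pi$ a uniformly random permutation of $\{1,\dots,n\}$. Define $\alpha(t) = \frac{1}{t(t-1)} \sum_{i \ne j,\ \pi(i) \le t,\ \pi(j) \le t} k_{ij}$. Then $\mathrm{Var}(\alpha(t)) = \frac{2 R_1 p_1(t) + 4 R_2 p_2(t) + R_3 p_3(t)}{t^2(t-1)^2} - \bar{k}^2$, where $R_1 = \sum_{i \ne j} k_{ij}^2$, $R_2 = \sum_{i \ne j \ne u, u \ne i} k_{ij} k_{iu}$, $R_3 = \sum_{i,j,u,v \text{ distinct}} k_{ij} k_{uv}$, $\bar{k} = \frac{1}{n(n-1)}\sum_{i\ne j} k_{ij}$, $p_1(t) = \frac{t(t-1)}{n(n-1)}$, $p_2(t) = p_1(t)\frac{t-2}{n-2}$, $p_3(t) = p_2(t)\frac{t-3}{n-3}$. -/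

import Mathlib

open Finset

variable {n : ℕ}

open Finset

variable {n : ℕ}

lemma card_fix (s : Finset (Fin n)) :
    (univ.filter (fun π : Equiv.Perm (Fin n) => ∀ x ∈ s, π x = x)).card
      = (n - s.card).factorial := by
  have h1 : (univ.filter (fun π : Equiv.Perm (Fin n) => ∀ x ∈ s, π x = x)).card
      = Fintype.card {f : Equiv.Perm (Fin n) // ∀ a, ¬(a ∉ s) → f a = a} := by
    rw [Fintype.card_subtype]
    congr 1
    apply Finset.filter_congr
    intro π _
    constructor
    · intro h a ha; exact h a (not_not.mp ha)
    · intro h x hx; exact h x (not_not.mpr hx)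
  rw [h1, ← Fintype.card_congr (Equiv.Perm.subtypeEquivSubtypePerm (fun a => a ∉ s)),
    Fintype.card_perm]
  congr 1
  rw [Fintype.card_subtype_compl, Fintype.card_fin, Fintype.card_coe]

lemma exists_extend (s : Finset (Fin n)) (g : Fin n → Fin n) (hg : Set.InjOn g s) :
    ∃ σ : Equiv.Perm (Fin n), ∀ x ∈ s, σ x = g x := by
  classical
  set s' : Finset (Fin n) := s.image g with hs'
  have hcard : s'.card = s.card := Finset.card_image_of_injOn hg
  have f : {x // x ∈ s} → {y // y ∈ s'} := fun x => ⟨g x, Finset.mem_image_of_mem g x.2⟩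
  have hfinj : Function.Injective (fun x : {x // x ∈ s} => (⟨g x, Finset.mem_image_of_mem g x.2⟩ : {y // y ∈ s'})) := by
    intro a b hab
    have : g a = g b := congrArg Subtype.val hab
    exact Subtype.ext (hg a.2 b.2 this)
  have hbij : Function.Bijective (fun x : {x // x ∈ s} => (⟨g x, Finset.mem_image_of_mem g x.2⟩ : {y // y ∈ s'})) := by
    rw [Fintype.bijective_iff_injective_and_card]
    refine ⟨hfinj, ?_⟩
    rw [Fintype.card_coe, Fintype.card_coe, hcard]
  let e1 : {x // x ∈ s} ≃ {y // y ∈ s'} := Equiv.ofBijective _ hbij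
  have hcompl : Fintype.card {x : Fin n // x ∉ s} = Fintype.card {x : Fin n // x ∉ s'} := by
    rw [Fintype.card_subtype_compl, Fintype.card_subtype_compl,
      Fintype.card_coe, Fintype.card_coe, hcard]
  let e2 : {x : Fin n // x ∉ s} ≃ {x : Fin n // x ∉ s'} := Fintype.equivOfCardEq hcompl
  refine ⟨(Equiv.sumCompl (· ∈ s)).symm.trans ((e1.sumCongr e2).trans (Equiv.sumCompl (· ∈ s'))), ?_⟩
  intro x hx
  simp only [Equiv.trans_apply, Equiv.sumCompl_symm_apply_of_pos hx, Equiv.sumCongr_apply,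
    Sum.map_inl, Equiv.sumCompl_apply_inl]
  rfl

lemma card_agree (s : Finset (Fin n)) (g : Fin n → Fin n) (hg : Set.InjOn g s) :
    (univ.filter (fun π : Equiv.Perm (Fin n) => ∀ x ∈ s, π x = g x)).card
      = (n - s.card).factorial := by
  classical
  obtain ⟨σ, hσ⟩ := exists_extend s g hg
  rw [← card_fix s]
  apply Finset.card_bij' (fun π _ => σ⁻¹ * π) (fun π _ => σ * π)
  · intro π hπ
    simp only [Finset.mem_filter, Finset.mem_univ, true_and] at hπ ⊢
    intro x hx
    simp [Equiv.Perm.mul_apply, hπ x hx, ← hσ x hx]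
  · intro π hπ
    simp only [Finset.mem_filter, Finset.mem_univ, true_and] at hπ ⊢
    intro x hx
    simp [Equiv.Perm.mul_apply, hπ x hx, hσ x hx]
  · intro π _; simp [mul_assoc]
  · intro π _; simp [mul_assoc]


lemma card_lt_filter (t : ℕ) (htn : t ≤ n) :
    (univ.filter (fun x : Fin n => (x : ℕ) < t)).card = t := by
  have : (univ.filter (fun x : Fin n => (x : ℕ) < t))
      = (univ : Finset (Fin t)).image (Fin.castLE htn) := by
    ext x
    simp only [Finset.mem_filter, Finset.mem_univ, true_and, Finset.mem_image]
    constructor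
    · intro hx; exact ⟨⟨x, hx⟩, rfl⟩
    · rintro ⟨y, -, rfl⟩; exact y.2
  rw [this, Finset.card_image_of_injective _ (Fin.castLE_injective htn), Finset.card_univ,
    Fintype.card_fin]

lemma card_target (t : ℕ) (htn : t ≤ n) :
    Fintype.card {x : Fin n // (x : ℕ) < t} = t := by
  rw [Fintype.card_subtype]; exact card_lt_filter t htn

lemma count_perm (t : ℕ) (htn : t ≤ n) (s : Finset (Fin n)) :
    (univ.filter (fun π : Equiv.Perm (Fin n) => ∀ x ∈ s, (π x : ℕ) < t)).card
      = t.descFactorial s.card * (n - s.card).factorial := by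
  classical
  set Q : ({y // y ∈ s} → Fin n) → Prop :=
    fun g => Function.Injective g ∧ ∀ x, (g x : ℕ) < t with hQ
  rw [Finset.card_eq_sum_card_fiberwise
    (f := fun π : Equiv.Perm (Fin n) => (fun x : {y // y ∈ s} => π x))
    (t := univ.filter Q)
    (by
      intro π hπ
      simp only [Finset.mem_coe, Finset.mem_filter, Finset.mem_univ, true_and] at hπ ⊢
      refine ⟨fun a b hab => Subtype.ext (π.injective hab), fun x => hπ x x.2⟩)]
  have hfib : ∀ g ∈ univ.filter Q,
      ((univ.filter (fun π : Equiv.Perm (Fin n) => ∀ x ∈ s, (π x : ℕ) < t)).filter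
        (fun π => (fun x : {y // y ∈ s} => π x) = g)).card = (n - s.card).factorial := by
    intro g hg
    simp only [Finset.mem_filter, Finset.mem_univ, true_and, hQ] at hg
    set gh : Fin n → Fin n := fun x => if h : x ∈ s then g ⟨x, h⟩ else x with hgh
    have hinj : Set.InjOn gh s := by
      intro a ha b hb hab
      have ha' : a ∈ s := ha
      have hb' : b ∈ s := hb
      have hab' : g ⟨a, ha'⟩ = g ⟨b, hb'⟩ := by simpa [hgh, ha', hb'] using hab
      exact congrArg Subtype.val (hg.1 hab')
    have : ((univ.filter (fun π : Equiv.Perm (Fin n) => ∀ x ∈ s, (π x : ℕ) < t)).filter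
        (fun π => (fun x : {y // y ∈ s} => π x) = g))
        = univ.filter (fun π : Equiv.Perm (Fin n) => ∀ x ∈ s, π x = gh x) := by
      ext π
      simp only [Finset.mem_filter, Finset.mem_univ, true_and]
      constructor
      · rintro ⟨-, h2⟩ x hx
        simp only [hgh, dif_pos hx]
        exact congrFun h2 ⟨x, hx⟩
      · intro h
        constructor
        · intro x hx
          rw [h x hx]; simp only [hgh, dif_pos hx]; exact hg.2 ⟨x, hx⟩
        · funext x
          rw [h x x.2]; simp only [hgh, dif_pos x.2]
    rw [this, card_agree s gh hinj]
  rw [Finset.sum_congr rfl hfib, Finset.sum_const, smul_eq_mul]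
  congr 1
  have h1 : (univ.filter Q).card = Fintype.card {g : {y // y ∈ s} → Fin n // Q g} :=
    (Fintype.card_subtype _).symm
  let e : {g : {y // y ∈ s} → Fin n // Q g} ≃ ({y // y ∈ s} ↪ {x : Fin n // (x : ℕ) < t}) :=
  { toFun := fun g => ⟨fun x => ⟨g.1 x, g.2.2 x⟩, fun a b hab =>
      g.2.1 (congrArg Subtype.val hab)⟩
    invFun := fun e => ⟨fun x => (e x : Fin n),
      ⟨fun a b hab => e.injective (Subtype.ext hab), fun x => (e x).2⟩⟩
    left_inv := fun g => rfl
    right_inv := fun e => rfl }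
  rw [h1, Fintype.card_congr e, Fintype.card_embedding_eq, card_target t htn, Fintype.card_coe]

lemma cast_descFact (t m : ℕ) :
    ((t.descFactorial m : ℕ) : ℝ) = ∏ k ∈ Finset.range m, ((t : ℝ) - k) := by
  induction m with
  | zero => simp
  | succ m ih =>
    rw [Nat.descFactorial_succ, Finset.prod_range_succ, ← ih]
    rcases le_or_gt m t with h | h
    · push_cast [Nat.cast_sub h]; ring
    · rw [Nat.sub_eq_zero_of_le (le_of_lt h)]
      have ht : t ∈ Finset.range m := Finset.mem_range.mpr h
      rw [show ((t.descFactorial m : ℕ) : ℝ) = ∏ k ∈ Finset.range m, ((t : ℝ) - k) from ih]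
      rw [Finset.prod_eq_zero ht (by simp)]
      simp

lemma erase_sum_eq_ite (i : Fin n) (g : Fin n → ℝ) :
    ∑ j ∈ univ.erase i, g j = ∑ j, if j ≠ i then g j else 0 := by
  rw [← Finset.filter_ne', Finset.sum_filter]

lemma pair_swap (g : Fin n → Fin n → ℝ) :
    ∑ i, ∑ j ∈ univ.erase i, g i j = ∑ i, ∑ j ∈ univ.erase i, g j i := by
  simp only [erase_sum_eq_ite]
  rw [Finset.sum_comm]
  apply Finset.sum_congr rfl
  intro i _
  apply Finset.sum_congr rfl
  intro j _
  by_cases h : j = i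
  · simp [h]
  · simp [h, Ne.symm h]

lemma triple_swap (f : Fin n → Fin n → Fin n → ℝ) :
    ∑ i, ∑ j ∈ univ.erase i, ∑ u ∈ (univ.erase i).erase j, f i j u
      = ∑ i, ∑ j ∈ univ.erase i, ∑ u ∈ (univ.erase i).erase j, f j i u := by
  have := pair_swap (fun i j => ∑ u ∈ (univ.erase i).erase j, f i j u)
  rw [this]
  apply Finset.sum_congr rfl; intro i _
  apply Finset.sum_congr rfl; intro j _
  rw [Finset.erase_right_comm]

lemma card3 {i j v : Fin n} (h1 : i ≠ j) (h2 : i ≠ v) (h3 : j ≠ v) :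
    ({i, j, v} : Finset (Fin n)).card = 3 := by
  rw [Finset.card_insert_of_notMem (by simp [h1, h2]),
    Finset.card_insert_of_notMem (by simp [h3]), Finset.card_singleton]

lemma card4 {i j u v : Fin n} (h1 : i ≠ j) (h2 : i ≠ u) (h3 : i ≠ v) (h4 : j ≠ u)
    (h5 : j ≠ v) (h6 : u ≠ v) : ({i, j, u, v} : Finset (Fin n)).card = 4 := by
  rw [Finset.card_insert_of_notMem (by simp [h1, h2, h3]),
    Finset.card_insert_of_notMem (by simp [h4, h5]),
    Finset.card_insert_of_notMem (by simp [h6]), Finset.card_singleton]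

lemma sum_ind (t : ℕ) (htn : t ≤ n) (s : Finset (Fin n)) (P : Equiv.Perm (Fin n) → Prop)
    [DecidablePred P] (h : ∀ π, P π ↔ ∀ x ∈ s, (π x : ℕ) < t) :
    ∑ π : Equiv.Perm (Fin n), (if P π then (1 : ℝ) else 0)
      = (t.descFactorial s.card * (n - s.card).factorial : ℕ) := by
  classical
  rw [Finset.sum_boole, ← count_perm t htn s]
  congr 2
  apply Finset.filter_congr
  intro π _
  simpa using h π

lemma sum_ind4 (t : ℕ) (htn : t ≤ n) (i j u v : Fin n) :
    ∑ π : Equiv.Perm (Fin n),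
        (if ((π i : ℕ) < t ∧ (π j : ℕ) < t) ∧ ((π u : ℕ) < t ∧ (π v : ℕ) < t)
          then (1 : ℝ) else 0)
      = (t.descFactorial ({i, j, u, v} : Finset (Fin n)).card
          * (n - ({i, j, u, v} : Finset (Fin n)).card).factorial : ℕ) := by
  classical
  apply sum_ind t htn
  intro π
  simp only [Finset.mem_insert, Finset.mem_singleton]
  constructor
  · rintro ⟨⟨h1, h2⟩, h3, h4⟩ x hx
    rcases hx with rfl | rfl | rfl | rfl <;> assumption
  · intro h
    exact ⟨⟨h i (Or.inl rfl), h j (Or.inr (Or.inl rfl))⟩,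
      h u (Or.inr (Or.inr (Or.inl rfl))), h v (Or.inr (Or.inr (Or.inr rfl)))⟩

lemma Emean (t : ℕ) (htn : t ≤ n) (k : Fin n → Fin n → ℝ) :
    ∑ π : Equiv.Perm (Fin n), ∑ i : Fin n, ∑ j ∈ univ.erase i,
        (if (π i : ℕ) < t ∧ (π j : ℕ) < t then k i j else 0)
      = (∑ i : Fin n, ∑ j ∈ univ.erase i, k i j)
        * ((t.descFactorial 2 * (n - 2).factorial : ℕ) : ℝ) := by
  rw [Finset.sum_comm, Finset.sum_mul]
  apply Finset.sum_congr rfl; intro i _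
  rw [Finset.sum_comm, Finset.sum_mul]
  apply Finset.sum_congr rfl; intro j hj
  have hij : j ≠ i := (Finset.mem_erase.mp hj).1
  have h1 : ∀ π : Equiv.Perm (Fin n),
      (if (π i : ℕ) < t ∧ (π j : ℕ) < t then k i j else 0)
      = k i j * (if ((π i : ℕ) < t ∧ (π j : ℕ) < t) ∧ ((π i : ℕ) < t ∧ (π j : ℕ) < t)
          then (1 : ℝ) else 0) := by
    intro π
    by_cases h : (π i : ℕ) < t ∧ (π j : ℕ) < t <;> simp [h]
  rw [Finset.sum_congr rfl (fun π _ => h1 π), ← Finset.mul_sum, sum_ind4 t htn i j i j]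
  rw [show ({i, j, i, j} : Finset (Fin n)) = {i, j} by ext x; simp; try tauto,
    Finset.card_pair (Ne.symm hij)]

lemma Esq (t : ℕ) (htn : t ≤ n) (k : Fin n → Fin n → ℝ) (hsym : ∀ i j, k i j = k j i) :
    ∑ π : Equiv.Perm (Fin n),
        (∑ i : Fin n, ∑ j ∈ univ.erase i,
          (if (π i : ℕ) < t ∧ (π j : ℕ) < t then k i j else 0)) ^ 2
      = 2 * (∑ i : Fin n, ∑ j ∈ univ.erase i, (k i j) ^ 2)
          * ((t.descFactorial 2 * (n - 2).factorial : ℕ) : ℝ)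
        + 4 * (∑ i : Fin n, ∑ j ∈ univ.erase i, ∑ u ∈ (univ.erase i).erase j, k i j * k i u)
          * ((t.descFactorial 3 * (n - 3).factorial : ℕ) : ℝ)
        + (∑ i : Fin n, ∑ j ∈ univ.erase i, ∑ u ∈ (univ.erase i).erase j,
            ∑ v ∈ ((univ.erase i).erase j).erase u, k i j * k u v)
          * ((t.descFactorial 4 * (n - 4).factorial : ℕ) : ℝ) := by
  classical
  set I : Equiv.Perm (Fin n) → Fin n → Fin n → ℝ :=
    fun π a b => if (π a : ℕ) < t ∧ (π b : ℕ) < t then k a b else 0 with hI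
  have hIfold : ∀ (π : Equiv.Perm (Fin n)) (a b : Fin n),
      (if (π a : ℕ) < t ∧ (π b : ℕ) < t then k a b else 0) = I π a b := fun _ _ _ => rfl
  simp only [hIfold]
  have hval : ∀ i j u v : Fin n, ∑ π : Equiv.Perm (Fin n), I π i j * I π u v
      = k i j * k u v * ((t.descFactorial ({i, j, u, v} : Finset (Fin n)).card
          * (n - ({i, j, u, v} : Finset (Fin n)).card).factorial : ℕ) : ℝ) := by
    intro i j u v
    have h1 : ∀ π : Equiv.Perm (Fin n), I π i j * I π u v
        = k i j * k u v * (if ((π i : ℕ) < t ∧ (π j : ℕ) < t) ∧ ((π u : ℕ) < t ∧ (π v : ℕ) < t)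
            then (1 : ℝ) else 0) := by
      intro π
      simp only [hI]
      by_cases ha : (π i : ℕ) < t ∧ (π j : ℕ) < t <;>
        by_cases hb : (π u : ℕ) < t ∧ (π v : ℕ) < t <;> simp [ha, hb]
    rw [Finset.sum_congr rfl (fun π _ => h1 π), ← Finset.mul_sum, sum_ind4 t htn i j u v]
  have hsq : ∀ π : Equiv.Perm (Fin n), (∑ i : Fin n, ∑ j ∈ univ.erase i, I π i j) ^ 2
      = ∑ i : Fin n, ∑ j ∈ univ.erase i, ∑ u : Fin n, ∑ v ∈ univ.erase u,
          I π i j * I π u v := by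
    intro π
    rw [sq, Finset.sum_mul_sum]
    apply Finset.sum_congr rfl; intro i _
    rw [show ∑ u : Fin n, ((∑ j ∈ univ.erase i, I π i j) * ∑ v ∈ univ.erase u, I π u v)
        = ∑ u : Fin n, ∑ j ∈ univ.erase i, ∑ v ∈ univ.erase u, I π i j * I π u v from
      Finset.sum_congr rfl (fun u _ => Finset.sum_mul_sum _ _ _ _)]
    exact Finset.sum_comm
  rw [Finset.sum_congr rfl (fun π _ => hsq π), Finset.sum_comm]
  have hswap : ∀ i : Fin n,
      (∑ π : Equiv.Perm (Fin n), ∑ j ∈ univ.erase i, ∑ u : Fin n, ∑ v ∈ univ.erase u,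
        I π i j * I π u v)
      = ∑ j ∈ univ.erase i, ∑ u : Fin n, ∑ v ∈ univ.erase u,
          ∑ π : Equiv.Perm (Fin n), I π i j * I π u v := by
    intro i
    rw [Finset.sum_comm]
    apply Finset.sum_congr rfl; intro j _
    rw [Finset.sum_comm]
    apply Finset.sum_congr rfl; intro u _
    exact Finset.sum_comm
  rw [Finset.sum_congr rfl (fun i _ => hswap i)]
  have hsplit : ∀ i : Fin n, ∀ j ∈ univ.erase i,
      (∑ u : Fin n, ∑ v ∈ univ.erase u, ∑ π : Equiv.Perm (Fin n), I π i j * I π u v)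
      = (k i j * k i j * ((t.descFactorial 2 * (n - 2).factorial : ℕ) : ℝ)
          + ∑ v ∈ (univ.erase i).erase j,
              k i j * k i v * ((t.descFactorial 3 * (n - 3).factorial : ℕ) : ℝ))
        + ((k i j * k j i * ((t.descFactorial 2 * (n - 2).factorial : ℕ) : ℝ)
          + ∑ v ∈ (univ.erase i).erase j,
              k i j * k j v * ((t.descFactorial 3 * (n - 3).factorial : ℕ) : ℝ))
        + ∑ u ∈ (univ.erase i).erase j,
            (k i j * k u i * ((t.descFactorial 3 * (n - 3).factorial : ℕ) : ℝ)
              + (k i j * k u j * ((t.descFactorial 3 * (n - 3).factorial : ℕ) : ℝ)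
              + ∑ v ∈ ((univ.erase i).erase j).erase u,
                  k i j * k u v * ((t.descFactorial 4 * (n - 4).factorial : ℕ) : ℝ)))) := by
    intro i j hj
    have hij : j ≠ i := (Finset.mem_erase.mp hj).1
    have hii : i ∈ univ.erase j := Finset.mem_erase.mpr ⟨Ne.symm hij, Finset.mem_univ i⟩
    have hPii : ∑ π : Equiv.Perm (Fin n), I π i j * I π i j
        = k i j * k i j * ((t.descFactorial 2 * (n - 2).factorial : ℕ) : ℝ) := by
      rw [hval i j i j, show ({i, j, i, j} : Finset (Fin n)) = {i, j} by ext x; simp; try tauto,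
        Finset.card_pair (Ne.symm hij)]
    have hPji : ∑ π : Equiv.Perm (Fin n), I π i j * I π j i
        = k i j * k j i * ((t.descFactorial 2 * (n - 2).factorial : ℕ) : ℝ) := by
      rw [hval i j j i, show ({i, j, j, i} : Finset (Fin n)) = {i, j} by ext x; simp; try tauto,
        Finset.card_pair (Ne.symm hij)]
    have hP3 : ∑ v ∈ (univ.erase i).erase j, (∑ π : Equiv.Perm (Fin n), I π i j * I π i v)
        = ∑ v ∈ (univ.erase i).erase j,
            k i j * k i v * ((t.descFactorial 3 * (n - 3).factorial : ℕ) : ℝ) := by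
      apply Finset.sum_congr rfl; intro v hv
      have hvj : v ≠ j := (Finset.mem_erase.mp hv).1
      have hvi : v ≠ i := (Finset.mem_erase.mp (Finset.mem_erase.mp hv).2).1
      rw [hval i j i v, show ({i, j, i, v} : Finset (Fin n)) = {i, j, v} by ext x; simp; try tauto,
        card3 (Ne.symm hij) (Ne.symm hvi) (Ne.symm hvj)]
    have hP4 : ∑ v ∈ (univ.erase i).erase j, (∑ π : Equiv.Perm (Fin n), I π i j * I π j v)
        = ∑ v ∈ (univ.erase i).erase j,
            k i j * k j v * ((t.descFactorial 3 * (n - 3).factorial : ℕ) : ℝ) := by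
      apply Finset.sum_congr rfl; intro v hv
      have hvj : v ≠ j := (Finset.mem_erase.mp hv).1
      have hvi : v ≠ i := (Finset.mem_erase.mp (Finset.mem_erase.mp hv).2).1
      rw [hval i j j v, show ({i, j, j, v} : Finset (Fin n)) = {i, j, v} by ext x; simp; try tauto,
        card3 (Ne.symm hij) (Ne.symm hvi) (Ne.symm hvj)]
    have hrest : ∀ u ∈ (univ.erase i).erase j,
        (∑ v ∈ univ.erase u, ∑ π : Equiv.Perm (Fin n), I π i j * I π u v)
        = k i j * k u i * ((t.descFactorial 3 * (n - 3).factorial : ℕ) : ℝ)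
          + (k i j * k u j * ((t.descFactorial 3 * (n - 3).factorial : ℕ) : ℝ)
          + ∑ v ∈ ((univ.erase i).erase j).erase u,
              k i j * k u v * ((t.descFactorial 4 * (n - 4).factorial : ℕ) : ℝ)) := by
      intro u hu
      have huj : u ≠ j := (Finset.mem_erase.mp hu).1
      have hui : u ≠ i := (Finset.mem_erase.mp (Finset.mem_erase.mp hu).2).1
      rw [← Finset.add_sum_erase (univ.erase u)
          (fun v => ∑ π : Equiv.Perm (Fin n), I π i j * I π u v)
          (Finset.mem_erase.mpr ⟨Ne.symm hui, Finset.mem_univ i⟩),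
        ← Finset.add_sum_erase ((univ.erase u).erase i)
          (fun v => ∑ π : Equiv.Perm (Fin n), I π i j * I π u v)
          (Finset.mem_erase.mpr ⟨hij,
            Finset.mem_erase.mpr ⟨Ne.symm huj, Finset.mem_univ j⟩⟩),
        show ((univ.erase u).erase i).erase j = ((univ.erase i).erase j).erase u by
          ext x; simp; try tauto]
      congr 1
      · rw [hval i j u i, show ({i, j, u, i} : Finset (Fin n)) = {i, j, u} by ext x; simp; try tauto,
          card3 (Ne.symm hij) (Ne.symm hui) (Ne.symm huj)]
      congr 1
      · rw [hval i j u j, show ({i, j, u, j} : Finset (Fin n)) = {i, j, u} by ext x; simp; try tauto,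
          card3 (Ne.symm hij) (Ne.symm hui) (Ne.symm huj)]
      apply Finset.sum_congr rfl; intro v hv
      have hvu : v ≠ u := (Finset.mem_erase.mp hv).1
      have hvj : v ≠ j := (Finset.mem_erase.mp (Finset.mem_erase.mp hv).2).1
      have hvi : v ≠ i :=
        (Finset.mem_erase.mp (Finset.mem_erase.mp (Finset.mem_erase.mp hv).2).2).1
      rw [hval i j u v]
      rw [card4 (Ne.symm hij) (Ne.symm hui) (Ne.symm hvi) (Ne.symm huj) (Ne.symm hvj) (Ne.symm hvu)]
    rw [← Finset.add_sum_erase univ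
        (fun u => ∑ v ∈ univ.erase u, ∑ π : Equiv.Perm (Fin n), I π i j * I π u v)
        (Finset.mem_univ i),
      ← Finset.add_sum_erase (univ.erase i)
        (fun u => ∑ v ∈ univ.erase u, ∑ π : Equiv.Perm (Fin n), I π i j * I π u v) hj,
      ← Finset.add_sum_erase (univ.erase i)
        (fun v => ∑ π : Equiv.Perm (Fin n), I π i j * I π i v) hj,
      ← Finset.add_sum_erase (univ.erase j)
        (fun v => ∑ π : Equiv.Perm (Fin n), I π i j * I π j v) hii,
      show (univ.erase j).erase i = (univ.erase i).erase j from Finset.erase_right_comm,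
      hPii, hPji, hP3, hP4, Finset.sum_congr rfl hrest]
  rw [Finset.sum_congr rfl (fun i _ => Finset.sum_congr rfl (hsplit i))]
  simp only [Finset.sum_add_distrib, ← Finset.sum_mul]
  have e1 : (∑ i : Fin n, ∑ j ∈ univ.erase i, k i j * k i j)
      = ∑ i : Fin n, ∑ j ∈ univ.erase i, (k i j) ^ 2 := by
    apply Finset.sum_congr rfl; intro i _
    apply Finset.sum_congr rfl; intro j _
    ring
  have e2 : (∑ i : Fin n, ∑ j ∈ univ.erase i, k i j * k j i)
      = ∑ i : Fin n, ∑ j ∈ univ.erase i, (k i j) ^ 2 := by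
    apply Finset.sum_congr rfl; intro i _
    apply Finset.sum_congr rfl; intro j _
    rw [← hsym i j]; ring
  have e3 : (∑ i : Fin n, ∑ j ∈ univ.erase i, ∑ v ∈ (univ.erase i).erase j, k i j * k j v)
      = ∑ i : Fin n, ∑ j ∈ univ.erase i, ∑ u ∈ (univ.erase i).erase j, k i j * k i u := by
    rw [triple_swap (fun i j v => k i j * k j v)]
    apply Finset.sum_congr rfl; intro i _
    apply Finset.sum_congr rfl; intro j _
    apply Finset.sum_congr rfl; intro v _
    rw [← hsym i j]
  have e4 : (∑ i : Fin n, ∑ j ∈ univ.erase i, ∑ u ∈ (univ.erase i).erase j, k i j * k u i)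
      = ∑ i : Fin n, ∑ j ∈ univ.erase i, ∑ u ∈ (univ.erase i).erase j, k i j * k i u := by
    apply Finset.sum_congr rfl; intro i _
    apply Finset.sum_congr rfl; intro j _
    apply Finset.sum_congr rfl; intro u _
    rw [hsym u i]
  have e5 : (∑ i : Fin n, ∑ j ∈ univ.erase i, ∑ u ∈ (univ.erase i).erase j, k i j * k u j)
      = ∑ i : Fin n, ∑ j ∈ univ.erase i, ∑ u ∈ (univ.erase i).erase j, k i j * k i u := by
    have : (∑ i : Fin n, ∑ j ∈ univ.erase i, ∑ u ∈ (univ.erase i).erase j, k i j * k u j)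
        = ∑ i : Fin n, ∑ j ∈ univ.erase i, ∑ u ∈ (univ.erase i).erase j, k i j * k j u := by
      apply Finset.sum_congr rfl; intro i _
      apply Finset.sum_congr rfl; intro j _
      apply Finset.sum_congr rfl; intro u _
      rw [hsym u j]
    rw [this, e3]
  rw [e1, e2, e3, e4, e5]
  ring

set_option maxHeartbeats 1600000 in
/-- Under the permutation null,
`Var(α(t)) = (2R₁p₁(t) + 4R₂p₂(t) + R₃p₃(t)) / (t²(t-1)²) - k̄²`. -/
theorem var_alpha (n t : ℕ) (hn : 4 ≤ n) (ht : 2 ≤ t) (ht' : t ≤ n - 2)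
    (k : Fin n → Fin n → ℝ) (hsym : ∀ i j, k i j = k j i) :
    let E : (Equiv.Perm (Fin n) → ℝ) → ℝ :=
      fun f => (∑ π : Equiv.Perm (Fin n), f π) / (Nat.factorial n : ℝ)
    let α : Equiv.Perm (Fin n) → ℝ := fun π =>
      (1 / ((t : ℝ) * ((t : ℝ) - 1))) *
        ∑ i : Fin n, ∑ j ∈ univ.erase i,
          (if (π i : ℕ) < t ∧ (π j : ℕ) < t then k i j else 0)
    let kbar : ℝ :=
      (∑ i : Fin n, ∑ j ∈ univ.erase i, k i j) / ((n : ℝ) * ((n : ℝ) - 1))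
    let R1 : ℝ := ∑ i : Fin n, ∑ j ∈ univ.erase i, (k i j) ^ 2
    let R2 : ℝ := ∑ i : Fin n, ∑ j ∈ univ.erase i,
      ∑ u ∈ (univ.erase i).erase j, k i j * k i u
    let R3 : ℝ := ∑ i : Fin n, ∑ j ∈ univ.erase i,
      ∑ u ∈ (univ.erase i).erase j, ∑ v ∈ ((univ.erase i).erase j).erase u,
        k i j * k u v
    let p1 : ℝ := ((t : ℝ) * ((t : ℝ) - 1)) / ((n : ℝ) * ((n : ℝ) - 1))
    let p2 : ℝ := p1 * (((t : ℝ) - 2) / ((n : ℝ) - 2))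
    let p3 : ℝ := p2 * (((t : ℝ) - 3) / ((n : ℝ) - 3))
    E (fun π => (α π) ^ 2) - (E α) ^ 2
      = (2 * R1 * p1 + 4 * R2 * p2 + R3 * p3) / ((t : ℝ) ^ 2 * ((t : ℝ) - 1) ^ 2)
        - kbar ^ 2 := by
  have htn : t ≤ n := by omega
  obtain ⟨m, rfl⟩ : ∃ m, n = m + 4 := ⟨n - 4, by omega⟩
  intro E α kbar R1 R2 R3 p1 p2 p3
  have ht2 : (2 : ℝ) ≤ (t : ℝ) := by exact_mod_cast ht
  have ht0 : (t : ℝ) ≠ 0 := by intro h; rw [h] at ht2; linarith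
  have ht1 : (t : ℝ) - 1 ≠ 0 := by intro h; nlinarith
  have hd2 : ((t.descFactorial 2 : ℕ) : ℝ) = (t : ℝ) * ((t : ℝ) - 1) := by
    rw [cast_descFact]
    norm_num [Finset.prod_range_succ]
  have hd3 : ((t.descFactorial 3 : ℕ) : ℝ) = (t : ℝ) * ((t : ℝ) - 1) * ((t : ℝ) - 2) := by
    rw [cast_descFact]
    norm_num [Finset.prod_range_succ]
    try ring
  have hd4 : ((t.descFactorial 4 : ℕ) : ℝ)
      = (t : ℝ) * ((t : ℝ) - 1) * ((t : ℝ) - 2) * ((t : ℝ) - 3) := by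
    rw [cast_descFact]
    norm_num [Finset.prod_range_succ]
    try ring
  have hfn : (m + 4).factorial = (m + 4) * ((m + 3) * ((m + 2) * ((m + 1) * m.factorial))) := by
    rfl
  have hfr : ((m + 4).factorial : ℝ)
      = ((m : ℝ) + 4) * (((m : ℝ) + 3) * (((m : ℝ) + 2) * (((m : ℝ) + 1) * (m.factorial : ℝ)))) := by
    rw [hfn]; push_cast; ring
  have hg2 : ((m + 2).factorial : ℝ) = ((m : ℝ) + 2) * (((m : ℝ) + 1) * (m.factorial : ℝ)) := by
    rw [show (m + 2).factorial = (m + 2) * ((m + 1) * m.factorial) from rfl]; push_cast; ring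
  have hg1 : ((m + 1).factorial : ℝ) = ((m : ℝ) + 1) * (m.factorial : ℝ) := by
    rw [show (m + 1).factorial = (m + 1) * m.factorial from rfl]; push_cast; ring
  have hm0 : (m.factorial : ℝ) ≠ 0 := by
    exact_mod_cast (Nat.factorial_pos m).ne'
  have hm1 : (m : ℝ) + 1 ≠ 0 := by positivity
  have hm2 : (m : ℝ) + 2 ≠ 0 := by positivity
  have hm3 : (m : ℝ) + 3 ≠ 0 := by positivity
  have hm4 : (m : ℝ) + 4 ≠ 0 := by positivity
  have hc2 : ((t.descFactorial 2 * ((m + 4) - 2).factorial : ℕ) : ℝ)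
      = (t : ℝ) * ((t : ℝ) - 1) * ((m + 2).factorial : ℝ) := by
    rw [show (m + 4) - 2 = m + 2 from by omega, Nat.cast_mul, hd2]
  have hc3 : ((t.descFactorial 3 * ((m + 4) - 3).factorial : ℕ) : ℝ)
      = (t : ℝ) * ((t : ℝ) - 1) * ((t : ℝ) - 2) * ((m + 1).factorial : ℝ) := by
    rw [show (m + 4) - 3 = m + 1 from by omega, Nat.cast_mul, hd3]
  have hc4 : ((t.descFactorial 4 * ((m + 4) - 4).factorial : ℕ) : ℝ)
      = (t : ℝ) * ((t : ℝ) - 1) * ((t : ℝ) - 2) * ((t : ℝ) - 3) * (m.factorial : ℝ) := by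
    rw [show (m + 4) - 4 = m from by omega, Nat.cast_mul, hd4]
  have h1 : E α = kbar := by
    show (∑ π : Equiv.Perm (Fin (m + 4)),
        (1 / ((t : ℝ) * ((t : ℝ) - 1))) *
          ∑ i : Fin (m + 4), ∑ j ∈ univ.erase i,
            (if (π i : ℕ) < t ∧ (π j : ℕ) < t then k i j else 0))
        / ((m + 4).factorial : ℝ)
      = (∑ i : Fin (m + 4), ∑ j ∈ univ.erase i, k i j)
        / (((m + 4 : ℕ) : ℝ) * (((m + 4 : ℕ) : ℝ) - 1))
    rw [← Finset.mul_sum, Emean t htn k]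
    set S0 : ℝ := ∑ i : Fin (m + 4), ∑ j ∈ univ.erase i, k i j with hS0
    rw [hc2, hfr, hg2]
    push_cast
    have A3 : (m : ℝ) + 4 - 1 = (m : ℝ) + 3 := by ring
    simp only [A3]
    field_simp
  have h2 : E (fun π => α π ^ 2)
      = (2 * R1 * p1 + 4 * R2 * p2 + R3 * p3) / ((t : ℝ) ^ 2 * ((t : ℝ) - 1) ^ 2) := by
    show (∑ π : Equiv.Perm (Fin (m + 4)),
        ((1 / ((t : ℝ) * ((t : ℝ) - 1))) *
          ∑ i : Fin (m + 4), ∑ j ∈ univ.erase i,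
            (if (π i : ℕ) < t ∧ (π j : ℕ) < t then k i j else 0)) ^ 2)
        / ((m + 4).factorial : ℝ)
      = (2 * (∑ i : Fin (m + 4), ∑ j ∈ univ.erase i, (k i j) ^ 2)
            * (((t : ℝ) * ((t : ℝ) - 1)) / (((m + 4 : ℕ) : ℝ) * (((m + 4 : ℕ) : ℝ) - 1)))
          + 4 * (∑ i : Fin (m + 4), ∑ j ∈ univ.erase i,
              ∑ u ∈ (univ.erase i).erase j, k i j * k i u)
            * ((((t : ℝ) * ((t : ℝ) - 1)) / (((m + 4 : ℕ) : ℝ) * (((m + 4 : ℕ) : ℝ) - 1)))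
                * (((t : ℝ) - 2) / (((m + 4 : ℕ) : ℝ) - 2)))
          + (∑ i : Fin (m + 4), ∑ j ∈ univ.erase i,
              ∑ u ∈ (univ.erase i).erase j, ∑ v ∈ ((univ.erase i).erase j).erase u,
                k i j * k u v)
            * (((((t : ℝ) * ((t : ℝ) - 1)) / (((m + 4 : ℕ) : ℝ) * (((m + 4 : ℕ) : ℝ) - 1)))
                * (((t : ℝ) - 2) / (((m + 4 : ℕ) : ℝ) - 2)))
                * (((t : ℝ) - 3) / (((m + 4 : ℕ) : ℝ) - 3))))
        / ((t : ℝ) ^ 2 * ((t : ℝ) - 1) ^ 2)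
    simp only [mul_pow]
    rw [← Finset.mul_sum, Esq t htn k hsym]
    set S1 : ℝ := ∑ i : Fin (m + 4), ∑ j ∈ univ.erase i, (k i j) ^ 2 with hS1
    set S2 : ℝ := ∑ i : Fin (m + 4), ∑ j ∈ univ.erase i,
      ∑ u ∈ (univ.erase i).erase j, k i j * k i u with hS2
    set S3 : ℝ := ∑ i : Fin (m + 4), ∑ j ∈ univ.erase i,
      ∑ u ∈ (univ.erase i).erase j, ∑ v ∈ ((univ.erase i).erase j).erase u,
        k i j * k u v with hS3
    rw [hc2, hc3, hc4, hfr, hg2, hg1]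
    push_cast
    have A1 : (m : ℝ) + 4 - 2 = (m : ℝ) + 2 := by ring
    have A2 : (m : ℝ) + 4 - 3 = (m : ℝ) + 1 := by ring
    have A3 : (m : ℝ) + 4 - 1 = (m : ℝ) + 3 := by ring
    simp only [A1, A2, A3]
    field_simp
  rw [h2, h1]
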